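/- Let $k \ge 2$ and let $z \in [0, 1/2]$ and nonnegative reals $x_1 \ge x_2 \ge \cdots \ge x_k$ with $\sum_i x_i = 1$ and $x_2 = z$. Then $\sum_{i=1}^k x_i^{k-1} \le (1-z)^{k-1} + z^{k-1}$. -/
import Mathlib


theorem power_sum_max (k : ℕ) (hk : 2 ≤ k) (z : ℝ) (hz0 : 0 ≤ z) (hz : z ≤ 1 / 2)
    (x : Fin k → ℝ) (hx0 : ∀ i, 0 ≤ x i) (hmono : ∀ i j : Fin k, i ≤ j → x j ≤ x i)
    (hsum : ∑ i, x i = 1) (hx2 : x ⟨1, by omega⟩ = z) :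
    ∑ i, (x i) ^ (k - 1) ≤ (1 - z) ^ (k - 1) + z ^ (k - 1) := by
  have hkk : k - 1 = (k - 2) + 1 := by omega
  set i0 : Fin k := ⟨0, by omega⟩ with hi0
  set a := x i0 with ha_def
  have hsplit : a + ∑ i ∈ Finset.univ.erase i0, x i = 1 := by
    rw [ha_def, Finset.add_sum_erase _ x (Finset.mem_univ i0), hsum]
  have hmem1 : (⟨1, by omega⟩ : Fin k) ∈ Finset.univ.erase i0 := by
    simp [hi0, Fin.ext_iff]
  have hzrest : z ≤ ∑ i ∈ Finset.univ.erase i0, x i := by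
    rw [← hx2]
    exact Finset.single_le_sum (fun i _ => hx0 i) hmem1
  have ha_le : a ≤ 1 - z := by linarith
  have ha0 : 0 ≤ a := hx0 i0
  have hxz : ∀ i ∈ Finset.univ.erase i0, x i ≤ z := by
    intro i hi
    rw [← hx2]
    apply hmono
    have hne := (Finset.mem_erase.mp hi).1
    have h1 : 1 ≤ (i : ℕ) := by
      rcases Nat.eq_zero_or_pos (i : ℕ) with h | h
      · exact absurd (Fin.ext h) hne
      · exact h
    exact h1
  have hrest : ∑ i ∈ Finset.univ.erase i0, x i ^ (k - 1) ≤ z ^ (k - 2) * (1 - a) := by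
    calc ∑ i ∈ Finset.univ.erase i0, x i ^ (k - 1)
        ≤ ∑ i ∈ Finset.univ.erase i0, z ^ (k - 2) * x i := by
          apply Finset.sum_le_sum
          intro i hi
          rw [hkk, pow_succ]
          exact mul_le_mul_of_nonneg_right
            (pow_le_pow_left₀ (hx0 i) (hxz i hi) _) (hx0 i)
      _ = z ^ (k - 2) * (1 - a) := by
          rw [← Finset.mul_sum]
          congr 1
          linarith
  have hsum' : ∑ i, x i ^ (k - 1)
      = a ^ (k - 1) + ∑ i ∈ Finset.univ.erase i0, x i ^ (k - 1) := by
    rw [ha_def, Finset.add_sum_erase _ (fun i => x i ^ (k - 1)) (Finset.mem_univ i0)]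
  have h1 : a ^ (k - 2) ≤ (1 - z) ^ (k - 2) := pow_le_pow_left₀ ha0 ha_le _
  have h2 : z ^ (k - 2) ≤ (1 - z) ^ (k - 2) := pow_le_pow_left₀ hz0 (by linarith) _
  have key : a ^ (k - 1) + z ^ (k - 2) * (1 - a) ≤ (1 - z) ^ (k - 1) + z ^ (k - 1) := by
    rw [hkk, pow_succ, pow_succ, pow_succ]
    nlinarith [mul_le_mul_of_nonneg_right h1 ha0,
      mul_le_mul_of_nonneg_right h2 (by linarith : (0:ℝ) ≤ 1 - z - a)]
  rw [hsum']
  linarith
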